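/- There exists a constant δ > 0 such that for every dimension n ≥ 1 and every closed set A ⊆ ℝⁿ with standard Gaussian measure γₙ(A) ≥ 2/3, the Minkowski sum A + A contains the closed Euclidean ball of radius δ centered at the origin. -/

import Mathlib

open MeasureTheory ProbabilityTheory Pointwise
open Real ENNReal

noncomputable def expDens (c : ℝ) (t : ℝ) : ℝ≥0∞ := ENNReal.ofReal (Real.exp (c * t - c ^ 2 / 2))

lemma measurable_expDens (c : ℝ) : Measurable (expDens c) := by
  unfold expDens; fun_prop

lemma gaussianReal_eq_withDensity (c : ℝ) :
    gaussianReal c 1 = (gaussianReal 0 1).withDensity (expDens c) := by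
  rw [gaussianReal_of_var_ne_zero c one_ne_zero, gaussianReal_of_var_ne_zero 0 one_ne_zero,
    ← withDensity_mul _ (measurable_gaussianPDF 0 1) (measurable_expDens c)]
  congr 1
  funext t
  simp only [Pi.mul_apply, gaussianPDF, expDens,
    ← ENNReal.ofReal_mul (gaussianPDFReal_nonneg 0 1 t)]
  congr 1
  simp only [gaussianPDFReal, NNReal.coe_one, mul_one, sub_zero]
  rw [mul_assoc, ← Real.exp_add]
  congr 1
  ring_nf

theorem lintegral_pi_prod {γ : Measure ℝ} [SigmaFinite γ] : ∀ {n : ℕ}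
    (f : Fin n → ℝ → ℝ≥0∞), (∀ i, Measurable (f i)) →
    ∫⁻ x, ∏ i, f i (x i) ∂(Measure.pi fun _ : Fin n => γ) = ∏ i, ∫⁻ t, f i t ∂γ := by
  intro n
  induction n with
  | zero =>
      intro f _
      simp [lintegral_const, Measure.pi_univ]
  | succ n ih =>
      intro f hf
      have A := (measurePreserving_piFinSuccAbove (fun _ : Fin (n + 1) => γ) 0).symm
      rw [MeasurePreserving.lintegral_map_equiv _ _ A]
      have heq : ∀ p : ℝ × (Fin n → ℝ),
          (∏ i, f i ((MeasurableEquiv.piFinSuccAbove (fun _ => ℝ) 0).symm p i)) =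
            f 0 p.1 * ∏ i : Fin n, f i.succ (p.2 i) := by
        intro p
        rw [Fin.prod_univ_succ]
        simp [MeasurableEquiv.piFinSuccAbove, Fin.insertNth_zero]
      simp only [heq]
      have hg : Measurable fun y : Fin n → ℝ => ∏ i : Fin n, f i.succ (y i) :=
        Finset.measurable_prod _ fun i _ => (hf i.succ).comp (measurable_pi_apply i)
      rw [lintegral_prod_mul (f := f 0) (g := fun y : Fin n → ℝ => ∏ i : Fin n, f i.succ (y i))
        (hf 0).aemeasurable hg.aemeasurable]
      rw [ih (fun i => f i.succ) (fun i => hf i.succ), Fin.prod_univ_succ]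

noncomputable abbrev stdPi (n : ℕ) : Measure (Fin n → ℝ) :=
  Measure.pi fun _ : Fin n => gaussianReal 0 1

lemma pi_gaussian_eq_withDensity {n : ℕ} (x : Fin n → ℝ) :
    (Measure.pi fun i => gaussianReal (x i) 1) =
      (stdPi n).withDensity (fun y => ∏ i, expDens (x i) (y i)) := by
  refine Measure.pi_eq fun s hs => ?_
  have hD : Measurable fun y : Fin n → ℝ => ∏ i, expDens (x i) (y i) :=
    Finset.measurable_prod _ fun i _ => (measurable_expDens (x i)).comp (measurable_pi_apply i)
  rw [withDensity_apply _ (MeasurableSet.univ_pi hs),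
    ← lintegral_indicator (MeasurableSet.univ_pi hs) _]
  have hpt : ∀ y : Fin n → ℝ,
      (Set.univ.pi s).indicator (fun y => ∏ i, expDens (x i) (y i)) y =
        ∏ i, (s i).indicator (expDens (x i)) (y i) := by
    intro y
    by_cases hy : y ∈ Set.univ.pi s
    · rw [Set.indicator_of_mem hy]
      exact Finset.prod_congr rfl fun i _ =>
        (Set.indicator_of_mem (hy i (Set.mem_univ i)) _).symm
    · rw [Set.indicator_of_notMem hy]
      rw [Set.mem_pi] at hy
      push_neg at hy
      obtain ⟨i, -, hi⟩ := hy
      exact (Finset.prod_eq_zero (Finset.mem_univ i) (Set.indicator_of_notMem hi _)).symm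
  simp only [hpt]
  rw [lintegral_pi_prod _ (fun i => (measurable_expDens (x i)).indicator (hs i))]
  refine Finset.prod_congr rfl fun i _ => ?_
  rw [lintegral_indicator (hs i) _, gaussianReal_eq_withDensity (x i),
    withDensity_apply _ (hs i)]

lemma map_reflection {n : ℕ} (x : Fin n → ℝ) :
    MeasurePreserving (fun y => x - y) (stdPi n) (Measure.pi fun i => gaussianReal (x i) 1) := by
  have h1 : ∀ c : ℝ, MeasurePreserving (fun t => c - t) (gaussianReal 0 1) (gaussianReal c 1) := by
    intro c
    refine ⟨(measurable_const.sub measurable_id), ?_⟩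
    have hneg : (gaussianReal 0 1).map (fun t => (-1 : ℝ) * t) = gaussianReal 0 1 := by
      rw [gaussianReal_map_const_mul (-1)]
      norm_num
    have : (fun t : ℝ => c - t) = (fun t : ℝ => c + t) ∘ (fun t : ℝ => (-1 : ℝ) * t) := by
      funext t; simp [sub_eq_add_neg]
    rw [this, ← Measure.map_map (by fun_prop : Measurable fun t : ℝ => c + t)
      (by fun_prop : Measurable fun t : ℝ => (-1 : ℝ) * t), hneg,
      gaussianReal_map_const_add, zero_add]
  have := measurePreserving_pi (fun _ : Fin n => gaussianReal 0 1)
    (fun i => gaussianReal (x i) 1) (fun i => h1 (x i))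
  convert this using 1
  rfl

lemma prod_expDens_eq {n : ℕ} (c : Fin n → ℝ) (y : Fin n → ℝ) :
    (∏ i, expDens (c i) (y i)) =
      ENNReal.ofReal (Real.exp (∑ i, c i * y i - (∑ i, c i ^ 2) / 2)) := by
  simp only [expDens]
  rw [← ENNReal.ofReal_prod_of_nonneg (fun i _ => (Real.exp_pos _).le)]
  congr 1
  rw [← Real.exp_sum]
  congr 1
  rw [Finset.sum_sub_distrib, ← Finset.sum_div]

lemma lintegral_prod_expDens_sq {n : ℕ} (x : Fin n → ℝ) :
    ∫⁻ y, (∏ i, expDens (x i) (y i)) ^ (2 : ℝ) ∂(stdPi n) =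
      ENNReal.ofReal (Real.exp (∑ i, x i ^ 2)) := by
  have hpt : ∀ y : Fin n → ℝ, (∏ i, expDens (x i) (y i)) ^ (2 : ℝ) =
      ENNReal.ofReal (Real.exp (∑ i, x i ^ 2)) * ∏ i, expDens (2 * x i) (y i) := by
    intro y
    rw [prod_expDens_eq, ENNReal.ofReal_rpow_of_nonneg (Real.exp_pos _).le (by norm_num),
      ← Real.exp_mul]
    have h2 : ∏ i, expDens (2 * x i) (y i) = ∏ i, expDens ((fun j => 2 * x j) i) (y i) := rfl
    rw [h2, prod_expDens_eq (fun j => 2 * x j) y, ← ENNReal.ofReal_mul (Real.exp_pos _).le,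
      ← Real.exp_add]
    congr 1
    have e1 : ∑ i, (fun j => 2 * x j) i * y i = 2 * ∑ i, x i * y i := by
      rw [Finset.mul_sum]; exact Finset.sum_congr rfl fun i _ => by ring
    have e2 : ∑ i, ((fun j => 2 * x j) i) ^ 2 = 4 * ∑ i, x i ^ 2 := by
      rw [Finset.mul_sum]; exact Finset.sum_congr rfl fun i _ => by ring
    rw [e1, e2]
    ring_nf
  simp only [hpt]
  have hg : Measurable fun y : Fin n → ℝ => ∏ i, expDens (2 * x i) (y i) :=
    Finset.measurable_prod _ fun i _ =>
      (measurable_expDens (2 * x i)).comp (measurable_pi_apply i)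
  rw [lintegral_const_mul _ hg]
  have : ∫⁻ y, ∏ i, expDens (2 * x i) (y i) ∂(stdPi n) = 1 := by
    have h2 : (fun y : Fin n → ℝ => ∏ i, expDens (2 * x i) (y i)) =
        fun y => ∏ i, expDens ((fun j => 2 * x j) i) (y i) := rfl
    rw [h2, ← setLIntegral_univ, ← withDensity_apply _ MeasurableSet.univ,
      ← pi_gaussian_eq_withDensity (fun j => 2 * x j)]
    exact measure_univ
  rw [this, mul_one]

lemma exp_quarter_lt : Real.exp 4⁻¹ * 3⁻¹ < 4 / 9 := by
  have h : -(4⁻¹ : ℝ) + 1 < Real.exp (-4⁻¹) := Real.add_one_lt_exp (by norm_num)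
  rw [Real.exp_neg] at h
  have hp := Real.exp_pos (4⁻¹ : ℝ)
  have h2 : Real.exp 4⁻¹ < 4 / 3 := by
    have := inv_strictAnti₀ (by norm_num : (0:ℝ) < 3 / 4) (by linarith : (3/4 : ℝ) < (Real.exp 4⁻¹)⁻¹)
    rwa [inv_inv, show ((3:ℝ)/4)⁻¹ = 4/3 by norm_num] at this
  nlinarith

lemma ennreal_23 : (ENNReal.ofReal (2 / 3) : ℝ≥0∞) = 2 / 3 := by
  rw [ENNReal.ofReal_div_of_pos (by norm_num), ENNReal.ofReal_ofNat, ENNReal.ofReal_ofNat]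

lemma ennreal_13 : (ENNReal.ofReal (3⁻¹ : ℝ) : ℝ≥0∞) = 1 / 3 := by
  rw [show ((3:ℝ)⁻¹) = 1 / 3 by norm_num, ENNReal.ofReal_div_of_pos (by norm_num),
    ENNReal.ofReal_one, ENNReal.ofReal_ofNat]

lemma core {n : ℕ} (x : Fin n → ℝ) (hx : ∑ i, x i ^ 2 ≤ 4⁻¹) {B : Set (Fin n → ℝ)}
    (hB : MeasurableSet B) (h2 : 2 / 3 ≤ stdPi n B) : ∃ a ∈ B, ∃ b ∈ B, a + b = x := by
  have hD : Measurable fun y : Fin n → ℝ => ∏ i, expDens (x i) (y i) :=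
    Finset.measurable_prod _ fun i _ =>
      (measurable_expDens (x i)).comp (measurable_pi_apply i)
  set ν : Measure (Fin n → ℝ) := Measure.pi fun i => gaussianReal (x i) 1 with hν
  have hνprob : IsProbabilityMeasure ν := by rw [hν]; infer_instance
  have hμprob : IsProbabilityMeasure (stdPi n) := by infer_instance
  -- bound on μ Bᶜ
  have hμBc : stdPi n Bᶜ ≤ ENNReal.ofReal 3⁻¹ := by
    rw [prob_compl_eq_one_sub hB, ennreal_13, tsub_le_iff_right]
    calc (1 : ℝ≥0∞) = 1/3 + 2/3 := by
          rw [ENNReal.div_add_div_same, show (1+2 : ℝ≥0∞) = 3 by norm_num,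
            ENNReal.div_self (by norm_num) (by norm_num)]
      _ ≤ 1/3 + stdPi n B := by gcongr
  -- Hölder bound on ν Bᶜ
  have hνBc : ν Bᶜ < 2 / 3 := by
    rw [hν, pi_gaussian_eq_withDensity, withDensity_apply _ hB.compl,
      ← lintegral_indicator hB.compl]
    have hpq : Real.HolderConjugate 2 2 := Real.HolderConjugate.two_two
    have hind : ∀ y : Fin n → ℝ, Bᶜ.indicator (fun y => ∏ i, expDens (x i) (y i)) y =
        ((fun y : Fin n → ℝ => ∏ i, expDens (x i) (y i)) *
          Bᶜ.indicator (1 : (Fin n → ℝ) → ℝ≥0∞)) y := by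
      intro y
      by_cases hy : y ∈ Bᶜ <;> simp [hy]
    calc ∫⁻ y, Bᶜ.indicator (fun y => ∏ i, expDens (x i) (y i)) y ∂(stdPi n)
        = ∫⁻ y, ((fun y : Fin n → ℝ => ∏ i, expDens (x i) (y i)) *
            Bᶜ.indicator (1 : (Fin n → ℝ) → ℝ≥0∞)) y ∂(stdPi n) := by
          simp only [hind]
      _ ≤ (∫⁻ y, (∏ i, expDens (x i) (y i)) ^ (2:ℝ) ∂(stdPi n)) ^ (1/(2:ℝ)) *
            (∫⁻ y, (Bᶜ.indicator (1 : (Fin n → ℝ) → ℝ≥0∞) y) ^ (2:ℝ) ∂(stdPi n)) ^ (1/(2:ℝ)) := by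
          exact ENNReal.lintegral_mul_le_Lp_mul_Lq _ hpq
            hD.aemeasurable ((measurable_one.indicator hB.compl).aemeasurable)
      _ = (ENNReal.ofReal (Real.exp (∑ i, x i ^ 2))) ^ (1/(2:ℝ)) *
            (stdPi n Bᶜ) ^ (1/(2:ℝ)) := by
          rw [lintegral_prod_expDens_sq]
          congr 1
          have hpt2 : ∀ y : Fin n → ℝ,
              (Bᶜ.indicator (1 : (Fin n → ℝ) → ℝ≥0∞) y) ^ (2:ℝ) =
                Bᶜ.indicator (1 : (Fin n → ℝ) → ℝ≥0∞) y := by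
            intro y
            by_cases hy : y ∈ Bᶜ <;>
              simp [hy, ENNReal.zero_rpow_of_pos (by norm_num : (0:ℝ) < 2)]
          simp only [hpt2]
          rw [lintegral_indicator_one hB.compl]
      _ ≤ (ENNReal.ofReal (Real.exp 4⁻¹)) ^ (1/(2:ℝ)) *
            (ENNReal.ofReal 3⁻¹) ^ (1/(2:ℝ)) := by
          gcongr
      _ = (ENNReal.ofReal (Real.exp 4⁻¹ * 3⁻¹)) ^ (1/(2:ℝ)) := by
          rw [ENNReal.ofReal_mul (Real.exp_pos _).le, ENNReal.mul_rpow_of_nonneg _ _ (by norm_num)]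
      _ < (ENNReal.ofReal (4/9)) ^ (1/(2:ℝ)) := by
          refine ENNReal.rpow_lt_rpow ?_ (by norm_num)
          exact (ENNReal.ofReal_lt_ofReal_iff (by norm_num)).mpr exp_quarter_lt
      _ = 2 / 3 := by
          rw [ENNReal.ofReal_rpow_of_nonneg (by norm_num) (by norm_num)]
          rw [show ((4:ℝ)/9) = (2/3)^(2:ℕ) by norm_num, ← Real.rpow_natCast ((2:ℝ)/3) 2,
            ← Real.rpow_mul (by norm_num)]
          norm_num [ennreal_23]
  -- the reflected preimage
  set C : Set (Fin n → ℝ) := (fun y => x - y) ⁻¹' B with hC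
  have hCmeas : MeasurableSet C := (map_reflection x).measurable hB
  have hμC : 1/3 < stdPi n C := by
    rw [hC, (map_reflection x).measure_preimage hB.nullMeasurableSet, ← hν]
    have hcompl : ν B = 1 - ν Bᶜ := by
      rw [← prob_compl_eq_one_sub hB.compl, compl_compl]
    rw [hcompl, lt_tsub_iff_right]
    calc (1:ℝ≥0∞)/3 + ν Bᶜ < 1/3 + 2/3 := by
          exact ENNReal.add_lt_add_left (by norm_num) hνBc
      _ = 1 := by
          rw [ENNReal.div_add_div_same, show (1+2 : ℝ≥0∞) = 3 by norm_num,
            ENNReal.div_self (by norm_num) (by norm_num)]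
  have hone : (1:ℝ≥0∞) < stdPi n B + stdPi n C := by
    calc (1:ℝ≥0∞) = 2/3 + 1/3 := by
          rw [ENNReal.div_add_div_same, show (2+1 : ℝ≥0∞) = 3 by norm_num,
            ENNReal.div_self (by norm_num) (by norm_num)]
      _ ≤ stdPi n B + 1/3 := by gcongr
      _ < stdPi n B + stdPi n C := by
          exact ENNReal.add_lt_add_left (measure_ne_top _ _) hμC
  have hne : (B ∩ C).Nonempty := by
    by_contra h
    have hdisj : Disjoint B C :=
      Set.disjoint_iff_inter_eq_empty.mpr (Set.not_nonempty_iff_eq_empty.mp h)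
    have := measure_union hdisj hCmeas (μ := stdPi n)
    have hle : stdPi n (B ∪ C) ≤ 1 := prob_le_one
    rw [this] at hle
    exact absurd (hone.trans_le hle) (lt_irrefl _)
  obtain ⟨z, hz1, hz2⟩ := hne
  exact ⟨z, hz1, x - z, hz2, by abel⟩

/-- The standard Gaussian measure on the Euclidean space `ℝⁿ`. -/
noncomputable def stdGaussianE (n : ℕ) : Measure (EuclideanSpace ℝ (Fin n)) :=
  (Measure.pi fun _ : Fin n => gaussianReal 0 1).map (EuclideanSpace.equiv (Fin n) ℝ).symm

/-- Steinhaus lemma: there is a universal `δ > 0` such that for every `n ≥ 1` and every closed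
set `A ⊆ ℝⁿ` of standard Gaussian measure at least `2/3`, the Minkowski sum `A + A` contains the
closed Euclidean ball of radius `δ` centered at the origin. -/
theorem steinhaus_lemma :
    ∃ δ : ℝ, 0 < δ ∧ ∀ n : ℕ, 1 ≤ n → ∀ A : Set (EuclideanSpace ℝ (Fin n)),
      IsClosed A → 2 / 3 ≤ stdGaussianE n A →
      Metric.closedBall 0 δ ⊆ A + A := by
  refine ⟨1/2, by norm_num, fun n _ A hA hmeas w hw => ?_⟩
  have e := EuclideanSpace.equiv (Fin n) ℝ
  set f : (Fin n → ℝ) → EuclideanSpace ℝ (Fin n) :=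
    ⇑(EuclideanSpace.equiv (Fin n) ℝ).symm with hf
  have hfmeas : Measurable f := (EuclideanSpace.equiv (Fin n) ℝ).symm.continuous.measurable
  set B : Set (Fin n → ℝ) := f ⁻¹' A with hBdef
  have hB : MeasurableSet B := hfmeas hA.measurableSet
  have hmeasB : 2 / 3 ≤ stdPi n B := by
    rw [hBdef, ← Measure.map_apply hfmeas hA.measurableSet]
    exact hmeas
  set x : Fin n → ℝ := (EuclideanSpace.equiv (Fin n) ℝ) w with hxdef
  have hx : ∑ i, x i ^ 2 ≤ 4⁻¹ := by
    have hnorm : ‖w‖ ≤ 1/2 := by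
      simpa using Metric.mem_closedBall.mp hw
    have h1 : ‖w‖ = Real.sqrt (∑ i, w i ^ 2) := by
      rw [EuclideanSpace.norm_eq]
      congr 1
      exact Finset.sum_congr rfl fun i _ => by rw [Real.norm_eq_abs, sq_abs]
    have h2 : ∑ i, w i ^ 2 = ‖w‖ ^ 2 := by
      rw [h1, Real.sq_sqrt]
      positivity
    have : ∑ i, x i ^ 2 = ∑ i, w i ^ 2 := rfl
    rw [this, h2]
    nlinarith [norm_nonneg w]
  obtain ⟨a, ha, b, hb, hab⟩ := core x hx hB hmeasB
  rw [Set.mem_add]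
  refine ⟨f a, ha, f b, hb, ?_⟩
  have : f a + f b = f (a + b) := (map_add (EuclideanSpace.equiv (Fin n) ℝ).symm a b).symm
  rw [this, hab]
  rfl
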